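/- Let ρ ∈ Matrix (Fin d) (Fin d) ℂ and σ ∈ Matrix (Fin d') (Fin d') ℂ be positive definite matrices of trace 1, let A be a measurement with n outcomes on ℂ^d and B a measurement with m outcomes on ℂ^{d'}, all of whose effects are nonzero. Define the product measurement A ⊗ B with n·m outcomes by (A ⊗ B) (x, y) = (A x) ⊗ₖ (B y) (Kronecker product). Then F_{ρ ⊗ₖ σ}(A ⊗ B) equals the reindexing of the Kronecker product F_ρ(A) ⊗ₖ F_σ(B) along the index bijection ((i,i'),(j,j')) ↦ ((i,j),(i',j')); explicitly, for all i,j,k,l ∈ Fin d and i',j',k',l' ∈ Fin d': F_{ρ⊗ₖσ}(A⊗B) ((i,i'),(j,j')) ((k,k'),(l,l')) = F_ρ(A) ((i,j),(k,l)) * F_σ(B) ((i',j'),(k',l')). -/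

import Mathlib

open Matrix
open scoped Kronecker ComplexOrder MatrixOrder

noncomputable section

/-- A measurement (POVM): a finite family of positive semidefinite matrices summing to `1`. -/
def IsMeasurement {ι κ : Type*} [Fintype ι] [DecidableEq ι] [Fintype κ]
    (A : κ → Matrix ι ι ℂ) : Prop :=
  (∀ x, (A x).PosSemidef) ∧ ∑ x, A x = 1

/-- `A` is a post-processing of `B`: `A ⪯ B`. -/
def PostProc {ι : Type*} {n m : ℕ}
    (A : Fin n → Matrix ι ι ℂ) (B : Fin m → Matrix ι ι ℂ) : Prop :=
  ∃ μ : Fin n → Fin m → ℝ,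
    (∀ x y, 0 ≤ μ x y) ∧ (∀ y, ∑ x, μ x y = 1) ∧
    (∀ x, A x = ∑ y, (μ x y : ℂ) • B y)

/-- The outer product `|E⟩⟨F|` of the vectorizations of two matrices. -/
def outerProd {ι : Type*} (E F : Matrix ι ι ℂ) : Matrix (ι × ι) (ι × ι) ℂ :=
  Matrix.of fun p q => E p.1 p.2 * star (F q.1 q.2)

/-- The (un-normalized) Fisher information map of a measurement. -/
noncomputable def Fisher {ι κ : Type*} [Fintype ι] [Fintype κ]
    (A : κ → Matrix ι ι ℂ) : Matrix (ι × ι) (ι × ι) ℂ :=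
  ∑ x, (Matrix.trace (A x))⁻¹ • outerProd (A x) (A x)

/-- The generalized Fisher information map of a measurement, relative to a
positive definite state `ρ` (with positive semidefinite square root `ρ^{1/2}`). -/
noncomputable def FisherRho {ι κ : Type*} [Fintype ι] [DecidableEq ι] [Fintype κ]
    {ρ : Matrix ι ι ℂ} (hρ : ρ.PosDef) (A : κ → Matrix ι ι ℂ) :
    Matrix (ι × ι) (ι × ι) ℂ :=
  ∑ x, (Matrix.trace (ρ * A x))⁻¹ •
    outerProd (CFC.sqrt ρ * A x) (CFC.sqrt ρ * A x)

/-- The height of a finite family of self-adjoint matrices: the infimum of the traces of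
Hermitian matrices dominating every member in the Loewner order. -/
noncomputable def height {ι κ : Type*} [Fintype ι] [Fintype κ]
    (X : κ → Matrix ι ι ℂ) : ℝ :=
  sInf { t : ℝ | ∃ H : Matrix ι ι ℂ, H.IsHermitian ∧
    (∀ i, (H - X i).PosSemidef) ∧ t = (Matrix.trace H).re }
lemma kron_conjTranspose {a b : Type*} (A : Matrix a a ℂ) (B : Matrix b b ℂ) :
    (A ⊗ₖ B)ᴴ = Aᴴ ⊗ₖ Bᴴ := by
  ext ⟨i, i'⟩ ⟨j, j'⟩
  simp [conjTranspose_apply, kroneckerMap_apply, mul_comm]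

lemma kron_posSemidef {a b : Type*} [Fintype a] [Fintype b]
    {A : Matrix a a ℂ} {B : Matrix b b ℂ} (hA : A.PosSemidef) (hB : B.PosSemidef) :
    (A ⊗ₖ B).PosSemidef := by
  exact hA.kronecker hB

lemma kron_sqrt {a b : Type*} [Fintype a] [Fintype b] [DecidableEq a] [DecidableEq b]
    {A : Matrix a a ℂ} {B : Matrix b b ℂ} (hA : A.PosSemidef) (hB : B.PosSemidef)
    (hAB : (A ⊗ₖ B).PosSemidef) :
    CFC.sqrt (A ⊗ₖ B) = CFC.sqrt A ⊗ₖ CFC.sqrt B := by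
  refine CFC.sqrt_unique ?_ (nonneg_iff_posSemidef.mpr (kron_posSemidef
    (nonneg_iff_posSemidef.mp (CFC.sqrt_nonneg A)) (nonneg_iff_posSemidef.mp (CFC.sqrt_nonneg B))))
  rw [← Matrix.mul_kronecker_mul, CFC.sqrt_mul_sqrt_self A (nonneg_iff_posSemidef.mpr hA),
    CFC.sqrt_mul_sqrt_self B (nonneg_iff_posSemidef.mpr hB)]

/-- The generalized Fisher information map respects tensor (Kronecker) products. -/
theorem stmt8 {d d' n m : ℕ}
    {ρ : Matrix (Fin d) (Fin d) ℂ} (hρ : ρ.PosDef) (hρtr : Matrix.trace ρ = 1)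
    {σ : Matrix (Fin d') (Fin d') ℂ} (hσ : σ.PosDef) (hσtr : Matrix.trace σ = 1)
    (A : Fin n → Matrix (Fin d) (Fin d) ℂ) (B : Fin m → Matrix (Fin d') (Fin d') ℂ)
    (hA : IsMeasurement A) (hB : IsMeasurement B)
    (hA0 : ∀ x, A x ≠ 0) (hB0 : ∀ y, B y ≠ 0)
    (hρσ : (ρ ⊗ₖ σ).PosDef) :
    IsMeasurement (fun p : Fin n × Fin m => A p.1 ⊗ₖ B p.2) ∧
    ∀ (i j k l : Fin d) (i' j' k' l' : Fin d'),
      FisherRho hρσ (fun p : Fin n × Fin m => A p.1 ⊗ₖ B p.2)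
          ((i, i'), (j, j')) ((k, k'), (l, l')) =
        FisherRho hρ A (i, j) (k, l) * FisherRho hσ B (i', j') (k', l') := by
  constructor
  · refine ⟨fun p => kron_posSemidef (hA.1 p.1) (hB.1 p.2), ?_⟩
    rw [← Finset.univ_product_univ, Finset.sum_product]
    calc ∑ x, ∑ y, A x ⊗ₖ B y = (∑ x, A x) ⊗ₖ (∑ y, B y) := by
          ext ⟨i, i'⟩ ⟨j, j'⟩
          simp only [Matrix.sum_apply, kroneckerMap_apply, Finset.mul_sum, Finset.sum_mul]
          exact Finset.sum_comm
      _ = 1 := by rw [hA.2, hB.2, Matrix.one_kronecker_one]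
  · intro i j k l i' j' k' l'
    simp only [FisherRho, Matrix.sum_apply, Matrix.smul_apply, outerProd,
      Matrix.of_apply, kron_sqrt hρ.posSemidef hσ.posSemidef hρσ.posSemidef,
      ← Matrix.mul_kronecker_mul, Matrix.trace_kronecker, kroneckerMap_apply,
      smul_eq_mul]
    rw [← Finset.univ_product_univ, Finset.sum_product, Finset.sum_mul_sum]
    refine Finset.sum_congr rfl fun x _ => Finset.sum_congr rfl fun y _ => ?_
    rw [mul_inv]
    ring_nf
    simp only [star_mul']
    ring
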